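/- Suppose the offspring distribution p has mean m ∈ (0,1) and limsup_n (p_n)^{1/n} < 1. Then there exists c₂ > 1 such that for all s ∈ (1, c₂), the iterates f_n(s) are monotone decreasing in n and f_n(s) ↓ 1 as n → ∞. -/

import Mathlib

open MeasureTheory Filter Topology

noncomputable def genFun (p : ℕ → ℝ) (s : ℝ) : ℝ := ∑' j, p j * s ^ j

noncomputable def genFunIter (p : ℕ → ℝ) : ℕ → ℝ → ℝ
  | 0, s => s
  | n + 1, s => genFun p (genFunIter p n s)

private lemma aux_pow {r t : ℝ} (h1 : 1 ≤ t) (htr : t ≤ r) :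
    ∀ j : ℕ, t ^ j - 1 ≤ (j : ℝ) * (t - 1) + (j : ℝ) ^ 2 * r ^ j * (t - 1) ^ 2
  | 0 => by simp
  | (j+1) => by
    have IH := aux_pow h1 htr j
    have hr1 : (1:ℝ) ≤ r := le_trans h1 htr
    have hrj' : (1:ℝ) ≤ r ^ j := one_le_pow₀ hr1
    have hrj : (1:ℝ) ≤ r * r ^ j := by nlinarith
    have ht0 : (0:ℝ) ≤ t - 1 := by linarith
    have hj0 : (0:ℝ) ≤ (j:ℝ) := Nat.cast_nonneg j
    have hrj0 : (0:ℝ) ≤ r ^ j := by positivity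
    have f3 : t * (t ^ j - 1) ≤ t * ((j : ℝ) * (t - 1) + (j : ℝ) ^ 2 * r ^ j * (t - 1) ^ 2) :=
      mul_le_mul_of_nonneg_left IH (by linarith)
    have f1 : (j:ℝ) * (t-1)^2 ≤ (j:ℝ) * (r * r^j) * (t-1)^2 := by
      calc (j:ℝ) * (t-1)^2 = (j:ℝ) * 1 * (t-1)^2 := by ring
      _ ≤ (j:ℝ) * (r * r^j) * (t-1)^2 := by gcongr
    have f2 : (j:ℝ)^2 * t * r^j * (t-1)^2 ≤ (j:ℝ)^2 * (r * r^j) * (t-1)^2 := by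
      calc (j:ℝ)^2 * t * r^j * (t-1)^2 = (j:ℝ)^2 * (t * r^j) * (t-1)^2 := by ring
      _ ≤ (j:ℝ)^2 * (r * r^j) * (t-1)^2 := by gcongr
    have g1 : (0:ℝ) ≤ (j:ℝ) * (r * r^j) * (t-1)^2 := by positivity
    have g2 : (0:ℝ) ≤ (r * r^j) * (t-1)^2 := by positivity
    have e1 : t ^ (j+1) = t * t ^ j := by ring
    have e2 : r ^ (j+1) = r * r ^ j := by ring
    push_cast
    rw [e1, e2]
    nlinarith [f1, f2, f3, g1, g2]

/-- if the offspring distribution `p` has mean `m ∈ (0,1)` and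
`limsup_n (p_n)^{1/n} < 1`, then there exists `c₂ > 1` such that for all
`s ∈ (1, c₂)` the iterates `f_n(s)` are monotone decreasing in `n` and
`f_n(s) ↓ 1` as `n → ∞`. -/
theorem stmt5 (p : ℕ → ℝ) (m : ℝ)
    (hp_nonneg : ∀ j, 0 ≤ p j) (hp_sum : ∑' j, p j = 1)
    (hm : m = ∑' j : ℕ, (j : ℝ) * p j)
    (hm_summable : Summable fun j : ℕ => (j : ℝ) * p j)
    (hm_pos : 0 < m) (hm_lt : m < 1)
    (hlimsup : Filter.limsup (fun n : ℕ => p n ^ ((n : ℝ)⁻¹)) atTop < 1) :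
    ∃ c₂ > (1 : ℝ), ∀ s ∈ Set.Ioo (1 : ℝ) c₂,
      (Antitone fun n : ℕ => genFunIter p n s) ∧
      Tendsto (fun n : ℕ => genFunIter p n s) atTop (𝓝 1) := by
  -- Step 1: geometric bound on p
  have hsummable : Summable p := by
    by_contra h
    rw [tsum_eq_zero_of_not_summable h] at hp_sum
    norm_num at hp_sum
  have hple1 : ∀ j, p j ≤ 1 := by
    intro j
    rw [← hp_sum]
    exact Summable.le_tsum hsummable j (fun i _ => hp_nonneg i)
  obtain ⟨q, hq0, hq1, C, hC1, hpC⟩ :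
      ∃ q : ℝ, 0 < q ∧ q < 1 ∧ ∃ C : ℝ, 1 ≤ C ∧ ∀ j, p j ≤ C * q ^ j := by
    set L := Filter.limsup (fun n : ℕ => p n ^ ((n : ℝ)⁻¹)) atTop with hL
    set q : ℝ := max ((L + 1) / 2) (1/2) with hq
    have hq0 : 0 < q := lt_of_lt_of_le (by norm_num) (le_max_right _ _)
    have hq1 : q < 1 := max_lt (by linarith) (by norm_num)
    have hLq : L < q := lt_of_lt_of_le (by linarith) (le_max_left _ _)
    have hbdd : IsBoundedUnder (· ≤ ·) atTop (fun n : ℕ => p n ^ ((n : ℝ)⁻¹)) := by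
      refine isBoundedUnder_of ⟨1, fun n => ?_⟩
      exact Real.rpow_le_one (hp_nonneg n) (hple1 n) (by positivity)
    have hev : ∀ᶠ n in atTop, p n ^ ((n : ℝ)⁻¹) < q :=
      Filter.eventually_lt_of_limsup_lt hLq hbdd
    obtain ⟨N, hN⟩ := (eventually_atTop).1 hev
    refine ⟨q, hq0, hq1, (1/q) ^ (N + 1),
      one_le_pow₀ (by rw [le_div_iff₀ hq0]; linarith), ?_⟩
    intro j
    rcases le_or_gt (N + 1) j with hj | hj
    · have hjN : p j ^ ((j : ℝ)⁻¹) < q := hN j (by omega)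
      have hj0 : j ≠ 0 := by omega
      calc p j = (p j ^ ((j : ℝ)⁻¹)) ^ j := (Real.rpow_inv_natCast_pow (hp_nonneg j) hj0).symm
        _ ≤ q ^ j := pow_le_pow_left₀ (Real.rpow_nonneg (hp_nonneg j) _) hjN.le j
        _ ≤ (1/q) ^ (N+1) * q ^ j := le_mul_of_one_le_left (by positivity)
            (one_le_pow₀ (by rw [le_div_iff₀ hq0]; linarith))
    · have key : (1:ℝ) ≤ (1/q) ^ (N+1) * q ^ j := by
        have h1 : ((1:ℝ)/q) ^ j * q ^ j = 1 := by rw [← mul_pow]; field_simp; exact one_pow j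
        have h2 : ((1:ℝ)/q) ^ j ≤ (1/q) ^ (N+1) :=
          pow_le_pow_right₀ (by rw [le_div_iff₀ hq0]; linarith) (by omega)
        nlinarith [pow_pos hq0 j]
      exact (hple1 j).trans key
  -- Step 2: radius r, summabilities, constant K
  set r : ℝ := (1 + q⁻¹) / 2 with hrdef
  have hqinv : 1 < q⁻¹ := (one_lt_inv₀ hq0).mpr hq1
  have hr1 : 1 < r := by rw [hrdef]; linarith
  have hqr : q * r < 1 := by
    have : q * r = (q + 1) / 2 := by rw [hrdef]; field_simp
    rw [this]; linarith
  have hqr0 : (0:ℝ) ≤ q * r := by positivity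
  have S2' : Summable (fun j : ℕ => (j:ℝ)^2 * (q*r)^j) := by
    simpa using summable_pow_mul_geometric_of_norm_lt_one 2
      (by rw [Real.norm_eq_abs, abs_of_nonneg hqr0]; exact hqr : ‖q*r‖ < 1)
  have hnn : ∀ j : ℕ, (0:ℝ) ≤ (j:ℝ)^2 * p j * r^j :=
    fun j => mul_nonneg (mul_nonneg (by positivity) (hp_nonneg j)) (by positivity)
  have S2 : Summable (fun j : ℕ => (j:ℝ)^2 * p j * r^j) := by
    refine Summable.of_nonneg_of_le hnn (fun j => ?_) (S2'.mul_left C)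
    calc (j:ℝ)^2 * p j * r^j ≤ (j:ℝ)^2 * (C * q^j) * r^j := by
          gcongr; exact hpC j
      _ = C * ((j:ℝ)^2 * (q*r)^j) := by rw [mul_pow]; ring
  set K : ℝ := ∑' j : ℕ, (j:ℝ)^2 * p j * r^j with hKdef
  have hK0 : 0 ≤ K := tsum_nonneg hnn
  set M : ℝ := (1 + m) / 2 with hMdef
  have hM0 : 0 ≤ M := by rw [hMdef]; linarith
  have hM1 : M < 1 := by rw [hMdef]; linarith
  set δ : ℝ := min ((1 - m) / (2 * (K + 1))) (r - 1) with hδdef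
  have hδ0 : 0 < δ := lt_min (div_pos (by linarith) (by linarith)) (by linarith)
  set c₂ : ℝ := 1 + δ with hc₂def
  have hc₂1 : 1 < c₂ := by rw [hc₂def]; linarith
  have hc₂r : c₂ ≤ r := by
    have := min_le_right ((1 - m) / (2 * (K + 1))) (r - 1)
    rw [hc₂def]; linarith
  -- Step 3: key bound on genFun on [1, c₂]
  have hkey : ∀ t : ℝ, 1 ≤ t → t ≤ c₂ → 1 ≤ genFun p t ∧ genFun p t ≤ 1 + M * (t - 1) := by
    intro t h1 h2
    have htr : t ≤ r := h2.trans hc₂r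
    have ht0 : (0:ℝ) ≤ t := by linarith
    have SRHS : Summable (fun j : ℕ =>
        p j + (t-1) * ((j:ℝ) * p j) + (t-1)^2 * ((j:ℝ)^2 * p j * r^j)) :=
      (hsummable.add (hm_summable.mul_left (t-1))).add (S2.mul_left ((t-1)^2))
    have hpt : ∀ j : ℕ, p j * t ^ j ≤
        p j + (t-1) * ((j:ℝ) * p j) + (t-1)^2 * ((j:ℝ)^2 * p j * r^j) := by
      intro j
      have h := aux_pow h1 htr j
      nlinarith [hp_nonneg j, mul_le_mul_of_nonneg_left h (hp_nonneg j)]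
    have St : Summable (fun j : ℕ => p j * t ^ j) := by
      refine Summable.of_nonneg_of_le (fun j => mul_nonneg (hp_nonneg j) (by positivity)) hpt SRHS
    constructor
    · rw [show (1:ℝ) = ∑' j, p j from hp_sum.symm]
      refine Summable.tsum_le_tsum (fun j => ?_) hsummable St
      exact le_mul_of_one_le_right (hp_nonneg j) (one_le_pow₀ h1)
    · have hub : genFun p t ≤ 1 + (t-1) * m + (t-1)^2 * K := by
        have := Summable.tsum_le_tsum hpt St SRHS
        rw [genFun]
        calc (∑' j, p j * t ^ j) ≤ ∑' j : ℕ,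
              (p j + (t-1) * ((j:ℝ) * p j) + (t-1)^2 * ((j:ℝ)^2 * p j * r^j)) := this
          _ = (∑' j : ℕ, (p j + (t-1) * ((j:ℝ) * p j)))
              + ∑' j : ℕ, (t-1)^2 * ((j:ℝ)^2 * p j * r^j) :=
            Summable.tsum_add (hsummable.add (hm_summable.mul_left (t-1))) (S2.mul_left ((t-1)^2))
          _ = (∑' j : ℕ, p j) + (∑' j : ℕ, (t-1) * ((j:ℝ) * p j))
              + ∑' j : ℕ, (t-1)^2 * ((j:ℝ)^2 * p j * r^j) := by
            rw [Summable.tsum_add hsummable (hm_summable.mul_left (t-1))]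
          _ = 1 + (t-1) * m + (t-1)^2 * K := by
            rw [hp_sum, tsum_mul_left, tsum_mul_left, ← hm, ← hKdef]
      have hd : t - 1 ≤ (1 - m) / (2 * (K + 1)) := by
        have := min_le_left ((1 - m) / (2 * (K + 1))) (r - 1)
        rw [hc₂def] at h2; linarith
      have hd2 : (t - 1) * (2 * (K + 1)) ≤ 1 - m :=
        (le_div_iff₀ (by positivity)).1 hd
      have ht1 : (0:ℝ) ≤ t - 1 := by linarith
      have : (t-1) * m + (t-1)^2 * K ≤ M * (t-1) := by
        rw [hMdef]
        nlinarith [mul_le_mul_of_nonneg_left hd2 ht1, sq_nonneg (t-1), mul_nonneg ht1 ht1]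
      linarith
  -- Step 4: iteration
  refine ⟨c₂, hc₂1, fun s hs => ?_⟩
  obtain ⟨hs1, hs2⟩ := hs
  have hinv : ∀ n, 1 ≤ genFunIter p n s ∧ genFunIter p n s ≤ s := by
    intro n
    induction n with
    | zero => exact ⟨hs1.le, le_refl s⟩
    | succ n ih =>
      obtain ⟨ih1, ih2⟩ := ih
      have h2 : genFunIter p n s ≤ c₂ := ih2.trans hs2.le
      obtain ⟨k1, k2⟩ := hkey _ ih1 h2
      simp only [genFunIter]
      refine ⟨k1, ?_⟩
      have h := mul_le_mul_of_nonneg_right hM1.le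
        (show (0:ℝ) ≤ genFunIter p n s - 1 by linarith)
      rw [one_mul] at h
      linarith
  have hanti : Antitone fun n : ℕ => genFunIter p n s := by
    apply antitone_nat_of_succ_le
    intro n
    obtain ⟨ih1, ih2⟩ := hinv n
    obtain ⟨k1, k2⟩ := hkey _ ih1 (ih2.trans hs2.le)
    simp only [genFunIter]
    have h := mul_le_mul_of_nonneg_right hM1.le
      (show (0:ℝ) ≤ genFunIter p n s - 1 by linarith)
    rw [one_mul] at h
    linarith
  refine ⟨hanti, ?_⟩
  have hgeo : ∀ n, genFunIter p n s ≤ 1 + M ^ n * (s - 1) := by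
    intro n
    induction n with
    | zero => simp only [genFunIter, pow_zero]; linarith
    | succ n ih =>
      obtain ⟨ih1, ih2⟩ := hinv n
      obtain ⟨k1, k2⟩ := hkey _ ih1 (ih2.trans hs2.le)
      simp only [genFunIter]
      have h3 : M * (genFunIter p n s - 1) ≤ M * (M ^ n * (s - 1)) :=
        mul_le_mul_of_nonneg_left (by linarith) hM0
      calc genFun p (genFunIter p n s) ≤ 1 + M * (genFunIter p n s - 1) := k2
        _ ≤ 1 + M * (M ^ n * (s - 1)) := by linarith
        _ = 1 + M ^ (n+1) * (s - 1) := by ring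
  have hub : Tendsto (fun n : ℕ => 1 + M ^ n * (s - 1)) atTop (𝓝 1) := by
    have h := (tendsto_pow_atTop_nhds_zero_of_lt_one hM0 hM1).mul_const (s - 1)
    rw [zero_mul] at h
    simpa using h.const_add 1
  exact tendsto_of_tendsto_of_tendsto_of_le_of_le
    (g := fun _ : ℕ => (1:ℝ)) tendsto_const_nhds hub
    (fun n => (hinv n).1) (fun n => hgeo n)
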